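/- Let N ∈ GL(2,ℤ) with an irrational eigenvalue α > 1 and eigenvector a ∈ ℝ² \ {0}. Then the group Z⁺_{GL(2,ℤ)}(N) := {K ∈ GL(2,ℤ) : KN = NK and Ka ∈ ℝ₊*·a} is infinite cyclic. -/

import Mathlib

lemma ch2 (M : Matrix (Fin 2) (Fin 2) ℝ) :
    M * M - M.trace • M + M.det • (1 : Matrix (Fin 2) (Fin 2) ℝ) = 0 := by
  ext i j
  fin_cases i <;> fin_cases j <;>
    simp [Matrix.mul_apply, Matrix.trace, Matrix.det_fin_two, Fin.sum_univ_two,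
      Matrix.one_apply] <;> ring

lemma gap2 (c : ℝ) (t d : ℤ) (hd : d = 1 ∨ d = -1) (h : c * c - t * c + d = 0)
    (h1 : 2/3 < c) (h2 : c < 3/2) : c = 1 := by
  have hc : (0:ℝ) < c := by linarith
  rcases hd with rfl | rfl
  · have ht2 : (2:ℝ) ≤ (t:ℝ) := by
      push_cast at h ⊢; nlinarith [sq_nonneg (c - 1)]
    have ht3 : (t:ℝ) < 3 := by push_cast at h ⊢; nlinarith
    have ht : t = 2 := by
      have h2' : (2:ℤ) ≤ t := by exact_mod_cast ht2
      have h3' : t < 3 := by exact_mod_cast ht3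
      omega
    subst ht
    push_cast at h
    nlinarith [sq_nonneg (c - 1)]
  · have htl : (-1:ℝ) < (t:ℝ) := by push_cast at h ⊢; nlinarith
    have htr : (t:ℝ) < 1 := by push_cast at h ⊢; nlinarith
    have ht : t = 0 := by
      have h1' : (-1:ℤ) < t := by exact_mod_cast htl
      have h2' : t < 1 := by exact_mod_cast htr
      omega
    subst ht
    push_cast at h
    nlinarith

theorem stmt12 (N : Matrix (Fin 2) (Fin 2) ℤ) (hN : IsUnit N.det)
    (α : ℝ) (hα : 1 < α) (hirr : Irrational α) (a : Fin 2 → ℝ) (ha : a ≠ 0)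
    (heig : (N.map (Int.cast : ℤ → ℝ)).mulVec a = α • a) :
    ∃ K₀ : Matrix.GeneralLinearGroup (Fin 2) ℤ,
      Function.Injective (fun n : ℤ => K₀ ^ n) ∧
      ∀ K : Matrix.GeneralLinearGroup (Fin 2) ℤ,
        (((K : Matrix (Fin 2) (Fin 2) ℤ) * N = N * (K : Matrix (Fin 2) (Fin 2) ℤ) ∧
            ∃ c : ℝ, 0 < c ∧
              ((K : Matrix (Fin 2) (Fin 2) ℤ).map (Int.cast : ℤ → ℝ)).mulVec a = c • a)
          ↔ ∃ n : ℤ, K = K₀ ^ n) := by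
  classical
  set φ : Matrix (Fin 2) (Fin 2) ℤ →+* Matrix (Fin 2) (Fin 2) ℝ :=
    (Int.castRingHom ℝ).mapMatrix with hφdef
  have hmap : ∀ M : Matrix (Fin 2) (Fin 2) ℤ, M.map (Int.cast : ℤ → ℝ) = φ M := by
    intro M; rfl
  -- eigen equations coordinatewise
  have e0 : (N 0 0 : ℝ) * a 0 + (N 0 1 : ℝ) * a 1 = α * a 0 := by
    have := congrFun heig 0
    simpa [Matrix.mulVec, dotProduct, Fin.sum_univ_two, Matrix.map_apply] using this
  have e1 : (N 1 0 : ℝ) * a 0 + (N 1 1 : ℝ) * a 1 = α * a 1 := by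
    have := congrFun heig 1
    simpa [Matrix.mulVec, dotProduct, Fin.sum_univ_two, Matrix.map_apply] using this
  -- the irrationality tool : q * α = p impossible for q ≠ 0
  have hrat : ∀ p q : ℤ, (q : ℝ) * α = (p : ℝ) → q = 0 := by
    intro p q hpq
    by_contra hq
    have hq' : (q : ℝ) ≠ 0 := Int.cast_ne_zero.mpr hq
    have : α = ((p / q : ℚ) : ℝ) := by
      push_cast
      field_simp
      linarith [hpq]
    exact hirr ⟨(p / q : ℚ), this.symm⟩
  have ha0 : a 0 ≠ 0 := by
    intro h0
    have ha1 : a 1 ≠ 0 := by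
      intro h1
      apply ha
      funext i
      fin_cases i <;> simpa [h0, h1]
    rw [h0] at e1
    simp only [mul_zero, zero_add] at e1
    have h11 : (N 1 1 : ℝ) = α := mul_right_cancel₀ ha1 e1
    have h1 : ((1:ℤ) : ℝ) * α = ((N 1 1 : ℤ) : ℝ) := by rw [h11]; ring
    exact one_ne_zero (hrat _ _ h1)
  have hn01 : N 0 1 ≠ 0 := by
    intro h01
    rw [h01] at e0
    simp only [Int.cast_zero, zero_mul, add_zero] at e0
    have h00 : (N 0 0 : ℝ) = α := mul_right_cancel₀ ha0 e0
    have h1 : ((1:ℤ) : ℝ) * α = ((N 0 0 : ℤ) : ℝ) := by rw [h00]; ring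
    exact one_ne_zero (hrat _ _ h1)
  -- a1 relation
  have hA1 : (N 0 1 : ℝ) * a 1 = (α - (N 0 0 : ℝ)) * a 0 := by linarith
  -- kernel lemma
  have hker : ∀ M : Matrix (Fin 2) (Fin 2) ℤ, (φ M).mulVec a = 0 → M = 0 := by
    intro M hM
    have row : ∀ i : Fin 2, (M i 0 : ℝ) * a 0 + (M i 1 : ℝ) * a 1 = 0 := by
      intro i
      have := congrFun hM i
      simpa [hφdef, Matrix.mulVec, dotProduct, Fin.sum_univ_two,
        RingHom.mapMatrix_apply, Matrix.map_apply] using this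
    have hz : ∀ i : Fin 2, M i 1 = 0 ∧ M i 0 = 0 := by
      intro i
      have h1 : (M i 1 : ℝ) * α * a 0 = ((M i 1 * N 0 0 - M i 0 * N 0 1 : ℤ) : ℝ) * a 0 := by
        have hr := congrArg (fun x => (N 0 1 : ℝ) * x) (row i)
        simp only [mul_zero] at hr
        push_cast
        push_cast at hr
        linear_combination hr - (M i 1 : ℝ) * hA1
      have h2 : (M i 1 : ℝ) * α = ((M i 1 * N 0 0 - M i 0 * N 0 1 : ℤ) : ℝ) :=
        mul_right_cancel₀ ha0 h1
      have hM1 : M i 1 = 0 := hrat _ _ h2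
      refine ⟨hM1, ?_⟩
      have := row i
      rw [hM1] at this
      simp at this
      rcases this with h | h
      · exact_mod_cast h
      · exact absurd h ha0
    ext i j
    fin_cases j
    · simpa using (hz i).2
    · simpa using (hz i).1
  -- injectivity of the "value map" on GL
  have hinj : ∀ K L : Matrix.GeneralLinearGroup (Fin 2) ℤ,
      (φ (K : Matrix (Fin 2) (Fin 2) ℤ)).mulVec a = (φ (L : Matrix (Fin 2) (Fin 2) ℤ)).mulVec a →
      K = L := by
    intro K L h
    have : ((K : Matrix (Fin 2) (Fin 2) ℤ) - L) = 0 := by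
      apply hker
      rw [map_sub, Matrix.sub_mulVec, h, sub_self]
    have : (K : Matrix (Fin 2) (Fin 2) ℤ) = L := by
      have := sub_eq_zero.mp this; exact this
    exact Units.ext this
  -- value uniqueness
  have hval : ∀ (c c' : ℝ), c • a = c' • a → c = c' := by
    intro c c' h
    have : (c - c') • a = 0 := by rw [sub_smul, h, sub_self]
    rcases smul_eq_zero.mp this with h' | h'
    · linarith [sub_eq_zero.mp (by linarith [h'] : c - c' = (0:ℝ))]
    · exact absurd h' ha
  -- quadratic equation for eigenvalues
  have hquad : ∀ (K : Matrix.GeneralLinearGroup (Fin 2) ℤ) (c : ℝ),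
      (φ (K : Matrix (Fin 2) (Fin 2) ℤ)).mulVec a = c • a →
      ∃ t d : ℤ, (d = 1 ∨ d = -1) ∧ c * c - t * c + d = 0 := by
    intro K c hc
    set M := φ (K : Matrix (Fin 2) (Fin 2) ℤ) with hM
    have hCH := ch2 M
    have happ := congrArg (fun X => X.mulVec a) hCH
    simp only [Matrix.add_mulVec, Matrix.sub_mulVec, Matrix.smul_mulVec,
      Matrix.one_mulVec, Matrix.zero_mulVec] at happ
    rw [← Matrix.mulVec_mulVec, hc, Matrix.mulVec_smul, hc] at happ
    have hcomb : (c * c - M.trace * c + M.det) • a = 0 := by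
      rw [← happ]; module
    have hcoef : c * c - M.trace * c + M.det = 0 := by
      rcases smul_eq_zero.mp hcomb with h | h
      · exact h
      · exact absurd h ha
    refine ⟨(K : Matrix (Fin 2) (Fin 2) ℤ).trace, (K : Matrix (Fin 2) (Fin 2) ℤ).det, ?_, ?_⟩
    · exact Int.isUnit_iff.mp ((Matrix.isUnit_iff_isUnit_det _).mp K.isUnit)
    · have htr : M.trace = ((K : Matrix (Fin 2) (Fin 2) ℤ).trace : ℝ) := by
        simp [hM, hφdef, Matrix.trace, Fin.sum_univ_two, RingHom.mapMatrix_apply,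
          Matrix.map_apply]
      have hdet : M.det = ((K : Matrix (Fin 2) (Fin 2) ℤ).det : ℝ) := by
        rw [hM, hφdef, ← RingHom.map_det]
        simp
      rw [htr, hdet] at hcoef
      exact hcoef
  -- units machinery
  have hNU : IsUnit N := (Matrix.isUnit_iff_isUnit_det N).mpr hN
  set N' : Matrix.GeneralLinearGroup (Fin 2) ℤ := hNU.unit with hN'def
  have hN' : (N' : Matrix (Fin 2) (Fin 2) ℤ) = N := hNU.unit_spec
  have hcomm_iff : ∀ K : Matrix.GeneralLinearGroup (Fin 2) ℤ,
      ((K : Matrix (Fin 2) (Fin 2) ℤ) * N = N * (K : Matrix (Fin 2) (Fin 2) ℤ)) ↔ Commute K N' := by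
    intro K
    constructor
    · intro h
      exact Units.ext (by simpa [Units.val_mul, hN'] using h)
    · intro h
      have := congrArg Units.val h
      simpa [Units.val_mul, hN'] using this
  set Q : Matrix.GeneralLinearGroup (Fin 2) ℤ → ℝ → Prop :=
    fun K c => Commute K N' ∧ 0 < c ∧
      (φ (K : Matrix (Fin 2) (Fin 2) ℤ)).mulVec a = c • a with hQdef
  have hQ1 : Q 1 1 := by
    refine ⟨Commute.one_left _, one_pos, ?_⟩
    rw [Units.val_one, map_one, Matrix.one_mulVec, one_smul]
  have hQmul : ∀ K L c d, Q K c → Q L d → Q (K * L) (c * d) := by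
    intro K L c d hK hL
    refine ⟨hK.1.mul_left hL.1, mul_pos hK.2.1 hL.2.1, ?_⟩
    have h1 : (φ ((K * L : Matrix.GeneralLinearGroup (Fin 2) ℤ) : Matrix (Fin 2) (Fin 2) ℤ))
        = φ (K : Matrix (Fin 2) (Fin 2) ℤ) * φ (L : Matrix (Fin 2) (Fin 2) ℤ) := by
      rw [Units.val_mul, map_mul]
    rw [h1, ← Matrix.mulVec_mulVec, hL.2.2, Matrix.mulVec_smul, hK.2.2, smul_smul, mul_comm]
  have hQinv : ∀ K c, Q K c → Q K⁻¹ c⁻¹ := by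
    intro K c hK
    refine ⟨hK.1.inv_left, inv_pos.mpr hK.2.1, ?_⟩
    have h1 : φ ((K⁻¹ : Matrix.GeneralLinearGroup (Fin 2) ℤ) : Matrix (Fin 2) (Fin 2) ℤ) *
        φ (K : Matrix (Fin 2) (Fin 2) ℤ) = 1 := by
      rw [← map_mul, ← Units.val_mul, inv_mul_cancel, Units.val_one, map_one]
    have h2 : (φ ((K⁻¹ : Matrix.GeneralLinearGroup (Fin 2) ℤ) : Matrix (Fin 2) (Fin 2) ℤ)).mulVec
        (c • a) = a := by
      rw [← hK.2.2, Matrix.mulVec_mulVec, h1, Matrix.one_mulVec]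
    rw [Matrix.mulVec_smul] at h2
    have h3 := congrArg (fun v => c⁻¹ • v) h2
    simpa [smul_smul, inv_mul_cancel₀ (ne_of_gt hK.2.1), inv_mul_cancel_left₀ (ne_of_gt hK.2.1)] using h3
  have hQzpow : ∀ (K : Matrix.GeneralLinearGroup (Fin 2) ℤ) (c : ℝ), Q K c →
      ∀ n : ℤ, Q (K ^ n) (c ^ n) := by
    intro K c hK n
    induction n using Int.induction_on with
    | zero => simpa using hQ1
    | succ k ih =>
        rw [zpow_add_one, zpow_add_one₀ (ne_of_gt hK.2.1)]
        exact hQmul _ _ _ _ ih hK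
    | pred k ih =>
        rw [zpow_sub_one, zpow_sub_one₀ (ne_of_gt hK.2.1)]
        exact hQmul _ _ _ _ ih (hQinv _ _ hK)
  have hQN' : Q N' α := by
    refine ⟨Commute.refl _, by linarith, ?_⟩
    rw [hN', ← hmap]
    exact heig
  have hgap' : ∀ K c, Q K c → 1 ≤ c → c < 3/2 → K = 1 ∧ c = 1 := by
    intro K c hK h1 h2
    obtain ⟨t, d, hd, hq⟩ := hquad K c hK.2.2
    have hc1 : c = 1 := gap2 c t d hd hq (by linarith) h2
    subst hc1
    refine ⟨?_, rfl⟩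
    apply hinj K 1
    rw [hK.2.2, Units.val_one, map_one, Matrix.one_mulVec, one_smul]
  set T : Set ℝ := {c | 1 < c ∧ ∃ K, Q K c} with hTdef
  have hTα : α ∈ T := ⟨hα, N', hQN'⟩
  have hT32 : ∀ c ∈ T, 3/2 ≤ c := by
    intro c hc
    by_contra h
    push_neg at h
    obtain ⟨K, hK⟩ := hc.2
    have := (hgap' K c hK (le_of_lt hc.1) h).2
    linarith [hc.1]
  have hbdd : BddBelow T := ⟨3/2, hT32⟩
  set m := sInf T with hm
  have hm32 : 3/2 ≤ m := le_csInf ⟨α, hTα⟩ hT32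
  have hmT : m ∈ T := by
    by_contra hmem
    have h65 : sInf T < m * (6/5) := by rw [← hm]; nlinarith
    obtain ⟨c, hcT, hclt⟩ := exists_lt_of_csInf_lt ⟨α, hTα⟩ h65
    have hmc : m < c := lt_of_le_of_ne (csInf_le hbdd hcT) (fun h => hmem (h ▸ hcT))
    obtain ⟨c', hc'T, hc'lt⟩ := exists_lt_of_csInf_lt ⟨α, hTα⟩ hmc
    have hmc' : m ≤ c' := csInf_le hbdd hc'T
    obtain ⟨K, hK⟩ := hcT.2
    obtain ⟨K', hK'⟩ := hc'T.2
    have hc'pos : (0:ℝ) < c' := by linarith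
    have hr : Q (K * K'⁻¹) (c * c'⁻¹) := hQmul _ _ _ _ hK (hQinv _ _ hK')
    have h1r : 1 < c * c'⁻¹ := by
      rw [← div_eq_mul_inv]
      exact (one_lt_div hc'pos).mpr hc'lt
    have h2r : c * c'⁻¹ < 3/2 := by
      rw [← div_eq_mul_inv, div_lt_iff₀ hc'pos]
      nlinarith
    have heq := (hgap' _ _ hr (le_of_lt h1r) h2r).2
    have : c = c' := by
      field_simp at heq
      linarith
    linarith
  obtain ⟨hm1, K₀, hK₀⟩ := hmT
  refine ⟨K₀, ?_, ?_⟩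
  · intro i j hij
    simp only at hij
    have hQi := hQzpow K₀ m hK₀ i
    have hQj := hQzpow K₀ m hK₀ j
    rw [hij] at hQi
    have hmm : m ^ i = m ^ j := hval _ _ (hQi.2.2.symm.trans hQj.2.2)
    exact zpow_right_injective₀ (by linarith : (0:ℝ) < m) (by linarith : m ≠ 1) hmm
  · intro K
    constructor
    · rintro ⟨hcomm, c, hcpos, hcval⟩
      have hKQ : Q K c := ⟨(hcomm_iff K).mp hcomm, hcpos, by rw [← hmap]; exact hcval⟩
      obtain ⟨n, hn1, hn2⟩ := exists_mem_Ico_zpow hcpos hm1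
      refine ⟨n, ?_⟩
      have hQn : Q ((K₀ ^ n)⁻¹) ((m ^ n)⁻¹) := hQinv _ _ (hQzpow K₀ m hK₀ n)
      have hr : Q (K * (K₀ ^ n)⁻¹) (c * (m ^ n)⁻¹) := hQmul _ _ _ _ hKQ hQn
      have hmn : (0:ℝ) < m ^ n := zpow_pos (by linarith) n
      have h1r : 1 ≤ c * (m ^ n)⁻¹ := by
        rw [← div_eq_mul_inv, le_div_iff₀ hmn, one_mul]
        exact hn1
      have hrlt : c * (m ^ n)⁻¹ < m := by
        rw [← div_eq_mul_inv, div_lt_iff₀ hmn]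
        rw [zpow_add_one₀ (by linarith : m ≠ 0)] at hn2
        linarith [hn2]
      rcases eq_or_lt_of_le h1r with he | hlt
      · have h1 : K * (K₀ ^ n)⁻¹ = 1 := by
          apply hinj
          rw [hr.2.2, ← he, one_smul, Units.val_one, map_one, Matrix.one_mulVec]
        exact mul_inv_eq_one.mp h1
      · have hrT : c * (m ^ n)⁻¹ ∈ T := ⟨hlt, _, hr⟩
        exact absurd (csInf_le hbdd hrT) (not_le.mpr hrlt)
    · rintro ⟨n, rfl⟩
      have hQn := hQzpow K₀ m hK₀ n
      refine ⟨(hcomm_iff _).mpr hQn.1, m ^ n, hQn.2.1, ?_⟩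
      rw [hmap]
      exact hQn.2.2
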